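/- In ℂ³ ⊗ ℂ³ with standard basis {|0⟩, |1⟩, |2⟩} on each factor, the five normalized product states (1/√2)|0⟩(|0⟩−|1⟩), (1/√2)(|0⟩−|1⟩)|2⟩, (1/√2)(|1⟩−|2⟩)|0⟩, (1/√2)|2⟩(|1⟩−|2⟩), (1/3)(|0⟩+|1⟩+|2⟩)(|0⟩+|1⟩+|2⟩) form an unextendible product basis: they are pairwise orthonormal product states, and no nonzero product state of ℂ³ ⊗ ℂ³ is orthogonal to all five. -/

import Mathlib

/-- The product state `v ⊗ w` of `ℂ³ ⊗ ℂ³`, modelled as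
`EuclideanSpace ℂ (Fin 3 × Fin 3)`. -/
noncomputable def pv (v w : Fin 3 → ℂ) : EuclideanSpace ℂ (Fin 3 × Fin 3) :=
  WithLp.toLp 2 (fun p => v p.1 * w p.2)

/-- The five states of the 'Tiles' UPB of Bennett et al. -/
noncomputable def tiles : Fin 5 → EuclideanSpace ℂ (Fin 3 × Fin 3) :=
  ![((Real.sqrt 2 : ℝ) : ℂ)⁻¹ • pv ![1, 0, 0] ![1, -1, 0],
    ((Real.sqrt 2 : ℝ) : ℂ)⁻¹ • pv ![1, -1, 0] ![0, 0, 1],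
    ((Real.sqrt 2 : ℝ) : ℂ)⁻¹ • pv ![0, 1, -1] ![1, 0, 0],
    ((Real.sqrt 2 : ℝ) : ℂ)⁻¹ • pv ![0, 0, 1] ![0, 1, -1],
    ((3 : ℂ))⁻¹ • pv ![1, 1, 1] ![1, 1, 1]]

lemma key (a b c x y z : ℂ)
    (h1 : a * (x - y) = 0) (h2 : (a - b) * z = 0) (h3 : (b - c) * x = 0)
    (h4 : c * (y - z) = 0) (h5 : (a + b + c) * (x + y + z) = 0) :
    (a = 0 ∧ b = 0 ∧ c = 0) ∨ (x = 0 ∧ y = 0 ∧ z = 0) := by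
  rcases mul_eq_zero.mp h1 with e1 | f1
  · rcases mul_eq_zero.mp h2 with e2 | f2
    · rcases mul_eq_zero.mp h3 with e3 | f3
      · rcases mul_eq_zero.mp h4 with e4 | f4
        · rcases mul_eq_zero.mp h5 with e5 | f5
          · exact Or.inl ⟨by linear_combination e1, by linear_combination e1 - e2, by linear_combination e1 - e2 - e3⟩
          · exact Or.inl ⟨by linear_combination e1, by linear_combination e1 - e2, by linear_combination e1 - e2 - e3⟩
        · rcases mul_eq_zero.mp h5 with e5 | f5
          · exact Or.inl ⟨by linear_combination e1, by linear_combination e1 - e2, by linear_combination e1 - e2 - e3⟩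
          · exact Or.inl ⟨by linear_combination e1, by linear_combination e1 - e2, by linear_combination e1 - e2 - e3⟩
      · rcases mul_eq_zero.mp h4 with e4 | f4
        · rcases mul_eq_zero.mp h5 with e5 | f5
          · exact Or.inl ⟨by linear_combination e1, by linear_combination e1 - e2, by linear_combination e4⟩
          · exact Or.inl ⟨by linear_combination e1, by linear_combination e1 - e2, by linear_combination e4⟩
        · rcases mul_eq_zero.mp h5 with e5 | f5
          · exact Or.inl ⟨by linear_combination e1, by linear_combination e1 - e2, by linear_combination (-2 : ℂ) * e1 + e2 + e5⟩
          · exact Or.inr ⟨by linear_combination f3, by linear_combination (-1/2 : ℂ) * f3 + (1/2 : ℂ) * f4 + (1/2 : ℂ) * f5, by linear_combination (-1/2 : ℂ) * f3 + (-1/2 : ℂ) * f4 + (1/2 : ℂ) * f5⟩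
    · rcases mul_eq_zero.mp h3 with e3 | f3
      · rcases mul_eq_zero.mp h4 with e4 | f4
        · rcases mul_eq_zero.mp h5 with e5 | f5
          · exact Or.inl ⟨by linear_combination e1, by linear_combination e3 + e4, by linear_combination e4⟩
          · exact Or.inl ⟨by linear_combination e1, by linear_combination e3 + e4, by linear_combination e4⟩
        · rcases mul_eq_zero.mp h5 with e5 | f5
          · exact Or.inl ⟨by linear_combination e1, by linear_combination (-1/2 : ℂ) * e1 + (1/2 : ℂ) * e3 + (1/2 : ℂ) * e5, by linear_combination (-1/2 : ℂ) * e1 + (-1/2 : ℂ) * e3 + (1/2 : ℂ) * e5⟩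
          · exact Or.inr ⟨by linear_combination (-2 : ℂ) * f2 - f4 + f5, by linear_combination f2 + f4, by linear_combination f2⟩
      · rcases mul_eq_zero.mp h4 with e4 | f4
        · rcases mul_eq_zero.mp h5 with e5 | f5
          · exact Or.inl ⟨by linear_combination e1, by linear_combination -e1 - e4 + e5, by linear_combination e4⟩
          · exact Or.inr ⟨by linear_combination f3, by linear_combination -f2 - f3 + f5, by linear_combination f2⟩
        · rcases mul_eq_zero.mp h5 with e5 | f5
          · exact Or.inr ⟨by linear_combination f3, by linear_combination f2 + f4, by linear_combination f2⟩
          · exact Or.inr ⟨by linear_combination f3, by linear_combination f2 + f4, by linear_combination f2⟩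
  · rcases mul_eq_zero.mp h2 with e2 | f2
    · rcases mul_eq_zero.mp h3 with e3 | f3
      · rcases mul_eq_zero.mp h4 with e4 | f4
        · rcases mul_eq_zero.mp h5 with e5 | f5
          · exact Or.inl ⟨by linear_combination e2 + e3 + e4, by linear_combination e3 + e4, by linear_combination e4⟩
          · exact Or.inl ⟨by linear_combination e2 + e3 + e4, by linear_combination e3 + e4, by linear_combination e4⟩
        · rcases mul_eq_zero.mp h5 with e5 | f5
          · exact Or.inl ⟨by linear_combination (2/3 : ℂ) * e2 + (1/3 : ℂ) * e3 + (1/3 : ℂ) * e5, by linear_combination (-1/3 : ℂ) * e2 + (1/3 : ℂ) * e3 + (1/3 : ℂ) * e5, by linear_combination (-1/3 : ℂ) * e2 + (-2/3 : ℂ) * e3 + (1/3 : ℂ) * e5⟩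
          · exact Or.inr ⟨by linear_combination (2/3 : ℂ) * f1 + (1/3 : ℂ) * f4 + (1/3 : ℂ) * f5, by linear_combination (-1/3 : ℂ) * f1 + (1/3 : ℂ) * f4 + (1/3 : ℂ) * f5, by linear_combination (-1/3 : ℂ) * f1 + (-2/3 : ℂ) * f4 + (1/3 : ℂ) * f5⟩
      · rcases mul_eq_zero.mp h4 with e4 | f4
        · rcases mul_eq_zero.mp h5 with e5 | f5
          · exact Or.inl ⟨by linear_combination (1/2 : ℂ) * e2 + (-1/2 : ℂ) * e4 + (1/2 : ℂ) * e5, by linear_combination (-1/2 : ℂ) * e2 + (-1/2 : ℂ) * e4 + (1/2 : ℂ) * e5, by linear_combination e4⟩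
          · exact Or.inr ⟨by linear_combination f3, by linear_combination -f1 + f3, by linear_combination f1 + (-2 : ℂ) * f3 + f5⟩
        · rcases mul_eq_zero.mp h5 with e5 | f5
          · exact Or.inr ⟨by linear_combination f3, by linear_combination -f1 + f3, by linear_combination -f1 + f3 - f4⟩
          · exact Or.inr ⟨by linear_combination f3, by linear_combination -f1 + f3, by linear_combination -f1 + f3 - f4⟩
    · rcases mul_eq_zero.mp h3 with e3 | f3
      · rcases mul_eq_zero.mp h4 with e4 | f4
        · rcases mul_eq_zero.mp h5 with e5 | f5
          · exact Or.inl ⟨by linear_combination -e3 + (-2 : ℂ) * e4 + e5, by linear_combination e3 + e4, by linear_combination e4⟩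
          · exact Or.inr ⟨by linear_combination (1/2 : ℂ) * f1 + (-1/2 : ℂ) * f2 + (1/2 : ℂ) * f5, by linear_combination (-1/2 : ℂ) * f1 + (-1/2 : ℂ) * f2 + (1/2 : ℂ) * f5, by linear_combination f2⟩
        · rcases mul_eq_zero.mp h5 with e5 | f5
          · exact Or.inr ⟨by linear_combination f1 + f2 + f4, by linear_combination f2 + f4, by linear_combination f2⟩
          · exact Or.inr ⟨by linear_combination f1 + f2 + f4, by linear_combination f2 + f4, by linear_combination f2⟩
      · rcases mul_eq_zero.mp h4 with e4 | f4
        · rcases mul_eq_zero.mp h5 with e5 | f5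
          · exact Or.inr ⟨by linear_combination f3, by linear_combination -f1 + f3, by linear_combination f2⟩
          · exact Or.inr ⟨by linear_combination f3, by linear_combination -f1 + f3, by linear_combination f2⟩
        · rcases mul_eq_zero.mp h5 with e5 | f5
          · exact Or.inr ⟨by linear_combination f3, by linear_combination -f1 + f3, by linear_combination f2⟩
          · exact Or.inr ⟨by linear_combination f3, by linear_combination -f1 + f3, by linear_combination f2⟩


lemma sq2 : ((Real.sqrt 2 : ℝ) : ℂ) * ((Real.sqrt 2 : ℝ) : ℂ) = 2 := by
  rw [← Complex.ofReal_mul, Real.mul_self_sqrt (by norm_num)]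
  norm_num

lemma sq2_ne : ((Real.sqrt 2 : ℝ) : ℂ) ≠ 0 := by
  simp [Real.sqrt_eq_zero']

lemma inner_pv (a b v w : Fin 3 → ℂ) :
    (inner ℂ (pv a b) (pv v w) : ℂ) =
      (starRingEnd ℂ (a 0) * v 0 + starRingEnd ℂ (a 1) * v 1 + starRingEnd ℂ (a 2) * v 2) *
      (starRingEnd ℂ (b 0) * w 0 + starRingEnd ℂ (b 1) * w 1 + starRingEnd ℂ (b 2) * w 2) := by
  simp only [PiLp.inner_apply, RCLike.inner_apply, pv]
  rw [Fintype.sum_prod_type]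
  simp [Fin.sum_univ_three]
  ring

lemma inner_smul_pv (c d : ℂ) (a b v w : Fin 3 → ℂ) :
    (inner ℂ (c • pv a b) (d • pv v w) : ℂ) =
      starRingEnd ℂ c * d *
      ((starRingEnd ℂ (a 0) * v 0 + starRingEnd ℂ (a 1) * v 1 + starRingEnd ℂ (a 2) * v 2) *
       (starRingEnd ℂ (b 0) * w 0 + starRingEnd ℂ (b 1) * w 1 + starRingEnd ℂ (b 2) * w 2)) := by
  rw [inner_smul_left, inner_smul_right, inner_pv]; ring

lemma inner_smul_pv' (c : ℂ) (a b v w : Fin 3 → ℂ) :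
    (inner ℂ (c • pv a b) (pv v w) : ℂ) =
      starRingEnd ℂ c *
      ((starRingEnd ℂ (a 0) * v 0 + starRingEnd ℂ (a 1) * v 1 + starRingEnd ℂ (a 2) * v 2) *
       (starRingEnd ℂ (b 0) * w 0 + starRingEnd ℂ (b 1) * w 1 + starRingEnd ℂ (b 2) * w 2)) := by
  rw [inner_smul_left, inner_pv]

/-- The five 'Tiles' states form an unextendible product basis of `ℂ³ ⊗ ℂ³`:
they are pairwise orthonormal product states, and no nonzero product state is
orthogonal to all five. -/
theorem tiles_is_UPB :
    (∀ i : Fin 5, ∃ v w : Fin 3 → ℂ, v ≠ 0 ∧ w ≠ 0 ∧ tiles i = pv v w) ∧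
    (∀ i j : Fin 5, (inner ℂ (tiles i) (tiles j) : ℂ) = if i = j then 1 else 0) ∧
    (∀ v w : Fin 3 → ℂ, v ≠ 0 → w ≠ 0 →
      ¬ (∀ i : Fin 5, (inner ℂ (tiles i) (pv v w) : ℂ) = 0)) := by
  have habs : ∀ (c : ℂ) (a b : Fin 3 → ℂ), c • pv a b = pv (c • a) b := by
    intro c a b
    ext p
    simp [pv, smul_eq_mul]
    ring
  have hc2 : (((Real.sqrt 2 : ℝ) : ℂ)⁻¹) ≠ 0 := inv_ne_zero sq2_ne
  have hc3 : ((3 : ℂ))⁻¹ ≠ 0 := by norm_num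
  refine ⟨?_, ?_, ?_⟩
  · -- each tile is a product state
    intro i
    fin_cases i
    · exact ⟨_, _, smul_ne_zero hc2 (by intro h; simpa using congrFun h 0),
        (by intro h; simpa using congrFun h 0), habs _ _ _⟩
    · exact ⟨_, _, smul_ne_zero hc2 (by intro h; simpa using congrFun h 0),
        (by intro h; simpa using congrFun h 2), habs _ _ _⟩
    · exact ⟨_, _, smul_ne_zero hc2 (by intro h; simpa using congrFun h 1),
        (by intro h; simpa using congrFun h 0), habs _ _ _⟩
    · exact ⟨_, _, smul_ne_zero hc2 (by intro h; simpa using congrFun h 2),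
        (by intro h; simpa using congrFun h 1), habs _ _ _⟩
    · exact ⟨_, _, smul_ne_zero hc3 (by intro h; simpa using congrFun h 0),
        (by intro h; simpa using congrFun h 0), habs _ _ _⟩
  · -- orthonormality
    intro i j
    fin_cases i <;> fin_cases j <;>
      refine Eq.trans (inner_smul_pv _ _ _ _ _ _) ?_ <;>
      norm_num [Matrix.cons_val_zero, Matrix.cons_val_one, Matrix.head_cons,
        Matrix.cons_val_two, Matrix.tail_cons, Complex.conj_ofReal, Fin.ext_iff, map_ofNat] <;>
      field_simp <;>
      first
        | linear_combination (3:ℂ) * sq2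
        | linear_combination (2:ℂ) * sq2
        | linear_combination (4:ℂ) * sq2
        | linear_combination sq2
        | linear_combination -sq2
        | ring
  · -- unextendibility
    intro v w hv hw h
    have e0 := (mul_eq_zero.mp ((inner_smul_pv' (((Real.sqrt 2 : ℝ) : ℂ)⁻¹)
      ![1, 0, 0] ![1, -1, 0] v w).symm.trans (h 0))).resolve_left
      (by simp [Complex.conj_ofReal, sq2_ne])
    have e1 := (mul_eq_zero.mp ((inner_smul_pv' (((Real.sqrt 2 : ℝ) : ℂ)⁻¹)
      ![1, -1, 0] ![0, 0, 1] v w).symm.trans (h 1))).resolve_left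
      (by simp [Complex.conj_ofReal, sq2_ne])
    have e2 := (mul_eq_zero.mp ((inner_smul_pv' (((Real.sqrt 2 : ℝ) : ℂ)⁻¹)
      ![0, 1, -1] ![1, 0, 0] v w).symm.trans (h 2))).resolve_left
      (by simp [Complex.conj_ofReal, sq2_ne])
    have e3 := (mul_eq_zero.mp ((inner_smul_pv' (((Real.sqrt 2 : ℝ) : ℂ)⁻¹)
      ![0, 0, 1] ![0, 1, -1] v w).symm.trans (h 3))).resolve_left
      (by simp [Complex.conj_ofReal, sq2_ne])
    have e4 := (mul_eq_zero.mp ((inner_smul_pv' ((3 : ℂ))⁻¹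
      ![1, 1, 1] ![1, 1, 1] v w).symm.trans (h 4))).resolve_left
      (by norm_num)
    simp only [Matrix.cons_val_zero, Matrix.cons_val_one, Matrix.head_cons,
      Matrix.cons_val_two, Matrix.tail_cons, map_one, map_zero, map_neg,
      one_mul, zero_mul, neg_mul, add_zero, zero_add] at e0 e1 e2 e3 e4
    rcases key (v 0) (v 1) (v 2) (w 0) (w 1) (w 2)
      (by linear_combination e0) (by linear_combination e1)
      (by linear_combination e2) (by linear_combination e3)
      (by linear_combination e4) with ⟨ha, hb, hc⟩ | ⟨ha, hb, hc⟩
    · refine hv (funext fun k => ?_)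
      fin_cases k
      · exact ha
      · exact hb
      · exact hc
    · refine hw (funext fun k => ?_)
      fin_cases k
      · exact ha
      · exact hb
      · exact hc
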